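/- Let S_t and S_c be k×k symmetric positive definite matrices and n_t, n_c > 0 with n = n_t + n_c. If n_t·S_t ⪰ n_c·S_c (Loewner order), then (n/n_c)²·(S_t + S_c)⁻¹·S_t·(S_t + S_c)⁻¹ ⪰ S_t⁻¹. -/

import Mathlib

open Matrix

lemma aux_psd_smul {k : ℕ} {c : ℝ} {M : Matrix (Fin k) (Fin k) ℝ} (hc : 0 ≤ c)
    (hM : M.PosSemidef) : (c • M).PosSemidef := by
  refine ⟨?_, fun x => ?_⟩
  · unfold Matrix.IsHermitian
    rw [conjTranspose_smul, hM.1.eq]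
    simp
  · exact (hM.smul hc).2 x

lemma aux_pd_smul {k : ℕ} {c : ℝ} {M : Matrix (Fin k) (Fin k) ℝ} (hc : 0 < c)
    (hM : M.PosDef) : (c • M).PosDef := by
  refine ⟨(aux_psd_smul hc.le hM.posSemidef).1, fun x hx => ?_⟩
  exact (hM.smul hc).2 hx

open scoped MatrixOrder in
/-- If `Y` is PSD and invertible with `1 - Y` PSD, then `Y⁻¹ - 1` is PSD. -/
lemma aux_inv_sub_one {k : ℕ} {Y : Matrix (Fin k) (Fin k) ℝ} (hY : Y.PosSemidef)
    (hd : IsUnit Y.det) (h : ((1 : Matrix (Fin k) (Fin k) ℝ) - Y).PosSemidef) :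
    (Y⁻¹ - 1).PosSemidef := by
  have hYi : Y⁻¹.PosSemidef := hY.inv
  set T := CFC.sqrt Y⁻¹ with hTdef
  have hT : T.PosSemidef := Matrix.nonneg_iff_posSemidef.mp (CFC.sqrt_nonneg _)
  have hT2 : T * T = Y⁻¹ := CFC.sqrt_mul_sqrt_self _ hYi.nonneg
  have hdT : IsUnit T.det := by
    have h1 : T.det * T.det = Y⁻¹.det := by rw [← det_mul, hT2]
    have hdYi : IsUnit Y⁻¹.det := isUnit_nonsing_inv_det _ hd
    exact isUnit_of_mul_isUnit_left (by rw [h1]; exact hdYi)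
  have hYinv : Y = T⁻¹ * T⁻¹ := by
    rw [← Matrix.mul_inv_rev, hT2, nonsing_inv_nonsing_inv _ hd]
  have hTYT : T * Y * T = 1 := by
    rw [hYinv, ← mul_assoc, mul_assoc (T * T⁻¹), mul_nonsing_inv _ hdT,
      nonsing_inv_mul _ hdT, one_mul]
  have key : T * (1 - Y) * Tᴴ = Y⁻¹ - 1 := by
    rw [hT.isHermitian.eq, Matrix.mul_sub, Matrix.sub_mul, mul_one, hT2, hTYT]
  exact key ▸ h.mul_mul_conjTranspose_same T

open scoped MatrixOrder in
/-- Loewner anti-monotonicity of the inverse for positive definite matrices. -/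
lemma aux_inv_antitone {k : ℕ} {A B : Matrix (Fin k) (Fin k) ℝ}
    (hA : A.PosDef) (hB : B.PosDef) (h : (A - B).PosSemidef) :
    (B⁻¹ - A⁻¹).PosSemidef := by
  set S := CFC.sqrt A with hSdef
  have hS : S.PosSemidef := Matrix.nonneg_iff_posSemidef.mp (CFC.sqrt_nonneg _)
  have hS2 : S * S = A := CFC.sqrt_mul_sqrt_self _ hA.posSemidef.nonneg
  have hdA : IsUnit A.det := (Matrix.isUnit_iff_isUnit_det _).mp hA.isUnit
  have hdS : IsUnit S.det := by
    have h1 : S.det * S.det = A.det := by rw [← det_mul, hS2]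
    exact isUnit_of_mul_isUnit_left (by rw [h1]; exact hdA)
  have hSinvH : (S⁻¹)ᴴ = S⁻¹ := by rw [conjTranspose_nonsing_inv, hS.isHermitian.eq]
  set Y := S⁻¹ * B * S⁻¹ with hYdef
  have hY : Y.PosSemidef := by
    have := hB.posSemidef.mul_mul_conjTranspose_same S⁻¹
    rwa [hSinvH] at this
  have hdSi : IsUnit S⁻¹.det := isUnit_nonsing_inv_det _ hdS
  have hdB : IsUnit B.det := (Matrix.isUnit_iff_isUnit_det _).mp hB.isUnit
  have hdY : IsUnit Y.det := by
    rw [hYdef, det_mul, det_mul]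
    exact (hdSi.mul hdB).mul hdSi
  have hone : (1 : Matrix (Fin k) (Fin k) ℝ) - Y = S⁻¹ * (A - B) * (S⁻¹)ᴴ := by
    rw [hSinvH, Matrix.mul_sub, Matrix.sub_mul]
    congr 1
    rw [← hS2, ← mul_assoc, nonsing_inv_mul _ hdS, one_mul, mul_nonsing_inv _ hdS]
  have h1Y : ((1 : Matrix (Fin k) (Fin k) ℝ) - Y).PosSemidef := by
    rw [hone]; exact h.mul_mul_conjTranspose_same S⁻¹
  have hYi := aux_inv_sub_one hY hdY h1Y
  have hYinv : Y⁻¹ = S * B⁻¹ * S := by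
    apply inv_eq_right_inv
    rw [hYdef]
    calc S⁻¹ * B * S⁻¹ * (S * B⁻¹ * S)
        = S⁻¹ * B * (S⁻¹ * S) * B⁻¹ * S := by noncomm_ring
      _ = S⁻¹ * (B * B⁻¹) * S := by rw [nonsing_inv_mul _ hdS]; noncomm_ring
      _ = 1 := by rw [mul_nonsing_inv _ hdB, mul_one, nonsing_inv_mul _ hdS]
  have key : S⁻¹ * (Y⁻¹ - 1) * (S⁻¹)ᴴ = B⁻¹ - A⁻¹ := by
    rw [hSinvH, Matrix.mul_sub, Matrix.sub_mul, hYinv, mul_one]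
    congr 1
    · rw [← mul_assoc, ← mul_assoc, nonsing_inv_mul _ hdS, one_mul,
        mul_assoc, mul_nonsing_inv _ hdS, mul_one]
    · rw [← Matrix.mul_inv_rev, hS2]
  exact key ▸ hYi.mul_mul_conjTranspose_same S⁻¹

set_option linter.unnecessarySeqFocus false in
/-- For symmetric positive definite `S_t, S_c` and positive reals `n_t, n_c` with
`n = n_t + n_c`, if `n_t • S_t ⪰ n_c • S_c` then
`(n/n_c)² (S_t + S_c)⁻¹ S_t (S_t + S_c)⁻¹ ⪰ S_t⁻¹` in the Loewner order. -/
theorem uri_variance_ge_mri_variance_loewner {k : ℕ}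
    (St Sc : Matrix (Fin k) (Fin k) ℝ) (hSt : St.PosDef) (hSc : Sc.PosDef)
    (nt nc n : ℝ) (hnt : 0 < nt) (hnc : 0 < nc) (hn : n = nt + nc)
    (hord : (nt • St - nc • Sc).PosSemidef) :
    ((n / nc) ^ 2 • ((St + Sc)⁻¹ * St * (St + Sc)⁻¹) - St⁻¹).PosSemidef := by
  have hA : (St + Sc).PosDef := hSt.add hSc
  have hdA : IsUnit (St + Sc).det := (Matrix.isUnit_iff_isUnit_det _).mp hA.isUnit
  have hdSt : IsUnit St.det := (Matrix.isUnit_iff_isUnit_det _).mp hSt.isUnit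
  have hdSc : IsUnit Sc.det := (Matrix.isUnit_iff_isUnit_det _).mp hSc.isUnit
  -- first PSD ingredient : (nt/nc) • St - Sc
  have h1 : ((nt / nc) • St - Sc).PosSemidef := by
    have := aux_psd_smul (c := nc⁻¹) (by positivity) hord
    rwa [smul_sub, smul_smul, smul_smul, inv_mul_cancel₀ hnc.ne', one_smul,
      inv_mul_eq_div] at this
  -- second : St - (nc/nt) • Sc
  have h2 : (St - (nc / nt) • Sc).PosSemidef := by
    have := aux_psd_smul (c := nt⁻¹) (by positivity) hord
    rwa [smul_sub, smul_smul, smul_smul, inv_mul_cancel₀ hnt.ne', one_smul,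
      inv_mul_eq_div] at this
  have hBpd : ((nc / nt) • Sc).PosDef := aux_pd_smul (by positivity) hSc
  have h3 := aux_inv_antitone hSt hBpd h2
  have hinv : ((nc / nt) • Sc)⁻¹ = (nt / nc) • Sc⁻¹ := by
    apply inv_eq_right_inv
    rw [smul_mul_assoc, mul_smul_comm, smul_smul, mul_nonsing_inv _ hdSc]
    rw [div_mul_div_comm, mul_comm nc nt, div_self (by positivity), one_smul]
  rw [hinv] at h3
  -- third : (nt/nc) • Sc - Sc * St⁻¹ * Sc
  have h5 : ((nt / nc) • Sc - Sc * St⁻¹ * Sc).PosSemidef := by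
    have := h3.mul_mul_conjTranspose_same Sc
    rw [hSc.isHermitian.eq, Matrix.mul_sub, Matrix.sub_mul] at this
    rwa [mul_smul_comm, smul_mul_assoc, mul_nonsing_inv _ hdSc, one_mul] at this
  -- the middle matrix M
  set M : Matrix (Fin k) (Fin k) ℝ :=
    ((nt + 2 * nc) / nc) • ((nt / nc) • St - Sc) + ((nt / nc) • Sc - Sc * St⁻¹ * Sc)
    with hMdef
  have hM : M.PosSemidef := (aux_psd_smul (by positivity) h1).add h5
  have hMeq : M = (n / nc) ^ 2 • St - (St + Sc) * St⁻¹ * (St + Sc) := by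
    rw [hMdef, hn]
    have hexp : (St + Sc) * St⁻¹ * (St + Sc)
        = St + (2 : ℝ) • Sc + Sc * St⁻¹ * Sc := by
      calc (St + Sc) * St⁻¹ * (St + Sc)
          = (St * St⁻¹) * St + (St * St⁻¹) * Sc + Sc * (St⁻¹ * St)
            + Sc * St⁻¹ * Sc := by noncomm_ring
        _ = St + (2 : ℝ) • Sc + Sc * St⁻¹ * Sc := by
            rw [mul_nonsing_inv _ hdSt, nonsing_inv_mul _ hdSt, one_mul, one_mul,
              mul_one, two_smul]
            abel
    rw [hexp]
    match_scalars <;> field_simp <;> ring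
  -- conjugate back
  have hAH : ((St + Sc)⁻¹)ᴴ = (St + Sc)⁻¹ := by
    rw [conjTranspose_nonsing_inv, hA.isHermitian.eq]
  have key : (St + Sc)⁻¹ * M * ((St + Sc)⁻¹)ᴴ
      = (n / nc) ^ 2 • ((St + Sc)⁻¹ * St * (St + Sc)⁻¹) - St⁻¹ := by
    rw [hAH, hMeq, Matrix.mul_sub, Matrix.sub_mul]
    congr 1
    · rw [mul_smul_comm, smul_mul_assoc]
    · rw [← mul_assoc, ← mul_assoc, nonsing_inv_mul _ hdA, one_mul,
        mul_assoc, mul_nonsing_inv _ hdA, mul_one]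
  exact key ▸ hM.mul_mul_conjTranspose_same (St + Sc)⁻¹
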